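/- arXiv:2407.05997 — 2 statements merged into one kernel-verified Lean document; each statement's English description precedes it below -/
import Mathlib

section
/- Let t ∈ [0,∞)^m and let M be a nonempty compact subset of [0,∞)^m. Then there exists a φ-projection of t on M, that is, there exists s* ∈ M with D_φ(s*∣t) = inf_{s∈M} D_φ(s∣t). -/
open Filter Topology

/-- The extended-real-valued integrand `f(v,w)` of a `φ`-divergence:
`f(v,w) = w·φ(v/w)` if `w > 0`, `f(v,0) = v·L` if `v > 0`, and `f(0,0) = 0`,
where `L = lim_{x→∞} φ(x)/x ∈ ℝ ∪ {∞}`. -/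
noncomputable def phiF (φ : ℝ → ℝ) (L : EReal) (v w : ℝ) : EReal :=
  if 0 < w then ((w * φ (v / w) : ℝ) : EReal)
  else if 0 < v then (v : EReal) * L
  else 0

/-- The `φ`-divergence `D_φ(s∣t) = Σ_{i=1}^m f(s_i, t_i)` of `s` relative to `t`. -/
noncomputable def Dphi (φ : ℝ → ℝ) (L : EReal) {m : ℕ} (s t : Fin m → ℝ) : EReal :=
  ∑ i, phiF φ L (s i) (t i)

/-- `p` is a `φ`-projection of `t` on `M`: `p ∈ M` and `D_φ(p∣t) = inf_{s ∈ M} D_φ(s∣t)`. -/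
def IsPhiProj (φ : ℝ → ℝ) (L : EReal) {m : ℕ} (M : Set (Fin m → ℝ))
    (t p : Fin m → ℝ) : Prop :=
  p ∈ M ∧ Dphi φ L p t = ⨅ s ∈ M, Dphi φ L s t

/-- A function `F : (Fin m → ℝ) → EReal` that is lower semicontinuous on a nonempty
compact set `M` attains its minimum on `M`. -/
lemma exists_min_of_lscOn {m : ℕ} {M : Set (Fin m → ℝ)} (hMne : M.Nonempty)
    (hMcpt : IsCompact M) {F : (Fin m → ℝ) → EReal}
    (hF : LowerSemicontinuousOn F M) :
    ∃ p ∈ M, ∀ s ∈ M, F p ≤ F s := by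
  set b : EReal := ⨅ s ∈ M, F s with hb
  by_cases hbtop : b = ⊤
  · obtain ⟨p, hp⟩ := hMne
    refine ⟨p, hp, fun s hs => ?_⟩
    have hs' : (⊤ : EReal) ≤ F s := hbtop ▸ iInf₂_le s hs
    exact le_top.trans hs'
  · have : Nonempty {y : EReal // b < y} := ⟨⟨⊤, lt_top_iff_ne_top.2 hbtop⟩⟩
    set K : {y : EReal // b < y} → Set (Fin m → ℝ) := fun y => {x ∈ M | F x ≤ y.1} with hK
    have hKM : ∀ y, K y ⊆ M := fun y x hx => hx.1
    have hKcl : ∀ y, IsClosed (K y) := by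
      intro y
      apply isClosed_of_closure_subset
      intro x hx
      have hxM : x ∈ M := (hMcpt.isClosed.closure_subset_iff.2 (hKM y)) hx
      have hne : (𝓝[K y] x).NeBot := mem_closure_iff_nhdsWithin_neBot.1 hx
      refine ⟨hxM, ?_⟩
      by_contra hgt
      push_neg at hgt
      have hev : ∀ᶠ z in 𝓝[K y] x, y.1 < F z :=
        (hF x hxM y.1 hgt).filter_mono (nhdsWithin_mono x (hKM y))
      obtain ⟨z, hz1, hz2⟩ := (hev.and self_mem_nhdsWithin).exists
      exact absurd hz2.2 (not_le.2 hz1)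
    have hKne : ∀ y, (K y).Nonempty := by
      intro y
      by_contra h
      rw [Set.not_nonempty_iff_eq_empty] at h
      have hyb : y.1 ≤ b := by
        refine le_iInf₂ fun s hs => ?_
        by_contra hlt
        push_neg at hlt
        have hsK : s ∈ K y := ⟨hs, hlt.le⟩
        rw [h] at hsK
        exact hsK
      exact absurd hyb (not_le.2 y.2)
    have hKcpt : ∀ y, IsCompact (K y) := fun y => hMcpt.of_isClosed_subset (hKcl y) (hKM y)
    have hdir : Directed (· ⊇ ·) K := by
      intro y₁ y₂
      refine ⟨⟨min y₁.1 y₂.1, lt_min y₁.2 y₂.2⟩, ?_, ?_⟩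
      · intro x hx
        exact ⟨hx.1, hx.2.trans (min_le_left _ _)⟩
      · intro x hx
        exact ⟨hx.1, hx.2.trans (min_le_right _ _)⟩
    obtain ⟨p, hp⟩ :=
      IsCompact.nonempty_iInter_of_directed_nonempty_isCompact_isClosed K hdir hKne hKcpt hKcl
    have hpmem : ∀ y, p ∈ K y := Set.mem_iInter.1 hp
    have hpM : p ∈ M := (hpmem ⟨⊤, lt_top_iff_ne_top.2 hbtop⟩).1
    have hpb : F p ≤ b := le_of_forall_gt_imp_ge_of_dense fun a ha => (hpmem ⟨a, ha⟩).2
    exact ⟨p, hpM, fun s hs => hpb.trans (iInf₂_le s hs)⟩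

/-- `phiF` never takes the value `⊥` when `L ≠ ⊥`. -/
lemma phiF_ne_bot {φ : ℝ → ℝ} {L : EReal} (hL : L ≠ ⊥) (v w : ℝ) :
    phiF φ L v w ≠ ⊥ := by
  unfold phiF
  split_ifs with hw hv'
  · exact EReal.coe_ne_bot _
  · by_cases hLt : L = ⊤
    · rw [hLt, EReal.coe_mul_top_of_pos hv']
      exact top_ne_bot
    · lift L to ℝ using ⟨hLt, hL⟩
      rw [← EReal.coe_mul]
      exact EReal.coe_ne_bot _
  · simp

/-- Monotonicity of multiplication by a positive real in `EReal`. -/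
lemma coe_mul_le_mul_of_le {c : ℝ} {L : EReal} (hcL : (c : EReal) ≤ L)
    {v : ℝ} (hv : 0 < v) : ((v * c : ℝ) : EReal) ≤ (v : EReal) * L := by
  by_cases hLt : L = ⊤
  · rw [hLt, EReal.coe_mul_top_of_pos hv]
    exact le_top
  · have hLb : L ≠ ⊥ := fun h => by rw [h] at hcL; exact absurd hcL (by simp)
    lift L to ℝ using ⟨hLt, hLb⟩
    rw [← EReal.coe_mul, EReal.coe_le_coe_iff]
    exact mul_le_mul_of_nonneg_left (EReal.coe_le_coe_iff.1 hcL) hv.le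

/-- Lower semicontinuity of `v ↦ phiF φ L v 0` on `[0,∞)`, given a real lower
bound `c` on `L`. -/
lemma lsc_phiF_zero {φ : ℝ → ℝ} {L : EReal} {c : ℝ} (hcL : (c : EReal) ≤ L)
    {v₀ : ℝ} (hv₀ : v₀ ∈ Set.Ici (0:ℝ)) :
    LowerSemicontinuousWithinAt (fun v => phiF φ L v 0) (Set.Ici 0) v₀ := by
  rcases eq_or_lt_of_le (Set.mem_Ici.mp hv₀) with h0 | hpos
  · -- `v₀ = 0`, the value is `0`
    subst h0
    intro y hy
    have hval : phiF φ L (0:ℝ) 0 = 0 := by simp [phiF]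
    replace hy : y < phiF φ L (0:ℝ) 0 := hy
    rw [hval] at hy
    have htends : Tendsto (fun v : ℝ => ((v * c : ℝ) : EReal)) (𝓝[Set.Ici 0] (0:ℝ))
        (𝓝 ((0 : ℝ) : EReal)) := by
      apply (continuous_coe_real_ereal.tendsto _).comp
      have h1 : Tendsto (fun v : ℝ => v * c) (𝓝 (0:ℝ)) (𝓝 ((0:ℝ) * c)) :=
        (continuous_id.mul continuous_const).tendsto 0
      rw [zero_mul] at h1
      exact h1.mono_left nhdsWithin_le_nhds
    have hy0 : y < ((0 : ℝ) : EReal) := by simpa using hy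
    have hev : ∀ᶠ v in 𝓝[Set.Ici 0] (0:ℝ), y < ((v * c : ℝ) : EReal) :=
      htends.eventually (eventually_gt_nhds hy0)
    filter_upwards [hev, self_mem_nhdsWithin] with v hv1 hv2
    show y < phiF φ L v 0
    rcases eq_or_lt_of_le (Set.mem_Ici.mp hv2) with h0v | h0v
    · have hval' : phiF φ L v 0 = 0 := by simp [phiF, ← h0v]
      rw [hval']
      rw [← h0v] at hv1
      simpa using hv1
    · have hval' : phiF φ L v 0 = (v : EReal) * L := by simp [phiF, h0v]
      rw [hval']
      exact hv1.trans_le (coe_mul_le_mul_of_le hcL h0v)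
  · -- `v₀ > 0`, the value is `v₀ * L`
    intro y hy
    have hval : phiF φ L v₀ 0 = (v₀ : EReal) * L := by simp [phiF, hpos]
    replace hy : y < phiF φ L v₀ 0 := hy
    rw [hval] at hy
    have hposev : ∀ᶠ v in 𝓝[Set.Ici 0] v₀, 0 < v :=
      eventually_nhdsWithin_of_eventually_nhds (eventually_gt_nhds hpos)
    by_cases hLt : L = ⊤
    · filter_upwards [hposev] with v hv2
      show y < phiF φ L v 0
      have hval' : phiF φ L v 0 = (v : EReal) * L := by simp [phiF, hv2]
      rw [hval', hLt, EReal.coe_mul_top_of_pos hv2]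
      exact lt_top_iff_ne_top.2 (by
        intro hytop
        rw [hytop] at hy
        exact absurd hy (not_lt.2 le_top))
    · have hLb : L ≠ ⊥ := fun h => by rw [h] at hcL; exact absurd hcL (by simp)
      lift L to ℝ using ⟨hLt, hLb⟩ with r
      have htends : Tendsto (fun v : ℝ => ((v * r : ℝ) : EReal)) (𝓝[Set.Ici 0] v₀)
          (𝓝 ((v₀ * r : ℝ) : EReal)) := by
        apply (continuous_coe_real_ereal.tendsto _).comp
        exact ((continuous_id.mul continuous_const).tendsto v₀).mono_left nhdsWithin_le_nhds
      rw [← EReal.coe_mul] at hy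
      have hev := htends.eventually (eventually_gt_nhds hy)
      filter_upwards [hev, hposev] with v hv1 hv2
      show y < phiF φ (r : EReal) v 0
      have hval' : phiF φ (r : EReal) v 0 = ((v * r : ℝ) : EReal) := by
        simp [phiF, hv2, EReal.coe_mul]
      rw [hval']
      exact hv1

/-- a `φ`-projection of `t ∈ [0,∞)^m` on a nonempty compact
`M ⊆ [0,∞)^m` exists. -/
theorem statement3 (m : ℕ) (hm : 1 ≤ m) (φ : ℝ → ℝ) (L : EReal)
    (hφconv : ConvexOn ℝ (Set.Ici 0) φ)
    (hφ0 : ContinuousWithinAt φ (Set.Ici 0) 0)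
    (hL : Tendsto (fun x : ℝ => ((φ x / x : ℝ) : EReal)) atTop (𝓝 L))
    (t : Fin m → ℝ) (ht : ∀ i, 0 ≤ t i)
    (M : Set (Fin m → ℝ)) (hMne : M.Nonempty) (hMcpt : IsCompact M)
    (hMnn : ∀ s ∈ M, ∀ i, 0 ≤ s i) :
    ∃ p, IsPhiProj φ L M t p := by
  classical
  set c : ℝ := φ 2 - φ 1 with hc
  -- a support-line bound for `x ≥ 2`
  have hslope : ∀ x : ℝ, 2 ≤ x → φ 1 + c * (x - 1) ≤ φ x := by
    intro x hx
    rcases eq_or_lt_of_le hx with h2 | h2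
    · rw [← h2, hc]; ring_nf; rfl
    · have hs := hφconv.slope_mono_adjacent (show (1:ℝ) ∈ Set.Ici 0 by norm_num)
        (show x ∈ Set.Ici 0 from Set.mem_Ici.mpr (by linarith)) one_lt_two h2
      have hx2 : (0:ℝ) < x - 2 := by linarith
      have hs' : c ≤ (φ x - φ 2) / (x - 2) := by
        have : (φ 2 - φ 1) / ((2:ℝ) - 1) = c := by norm_num [hc]
        rw [this] at hs
        exact hs
      have hmul := (le_div_iff₀ hx2).1 hs'
      nlinarith [hmul]
  -- hence `c ≤ L`, in particular `L ≠ ⊥`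
  have hcL : (c : EReal) ≤ L := by
    have h1 : Tendsto (fun x : ℝ => ((c + (φ 1 - c) / x : ℝ) : EReal)) atTop
        (𝓝 ((c : ℝ) : EReal)) := by
      apply (continuous_coe_real_ereal.tendsto _).comp
      have h2 : Tendsto (fun x : ℝ => c + (φ 1 - c) / x) atTop (𝓝 (c + 0)) :=
        tendsto_const_nhds.add (tendsto_const_nhds.div_atTop tendsto_id)
      rwa [add_zero] at h2
    refine le_of_tendsto_of_tendsto h1 hL ?_
    filter_upwards [eventually_ge_atTop (2:ℝ)] with x hx
    have hx0 : (0:ℝ) < x := by linarith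
    have h3 := hslope x hx
    have h4 : c + (φ 1 - c) / x = (φ 1 + c * (x - 1)) / x := by
      field_simp
      ring
    rw [EReal.coe_le_coe_iff, h4]
    gcongr
  have hLbot : L ≠ ⊥ := fun h => by rw [h] at hcL; exact absurd hcL (by simp)
  -- continuity of `φ` on `[0, ∞)`
  have hφcont : ContinuousOn φ (Set.Ici 0) := by
    intro x hx
    rcases eq_or_lt_of_le (Set.mem_Ici.mp hx) with h0 | h0
    · rw [← h0]; exact hφ0
    · have hint := hφconv.continuousOn_interior
      rw [interior_Ici] at hint
      exact (hint.continuousAt (isOpen_Ioi.mem_nhds h0)).continuousWithinAt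
  -- lower semicontinuity of each coordinate integrand on `[0, ∞)`
  have hcoord : ∀ (i : Fin m) (v₀ : ℝ), v₀ ∈ Set.Ici (0:ℝ) →
      LowerSemicontinuousWithinAt (fun v => phiF φ L v (t i)) (Set.Ici 0) v₀ := by
    intro i v₀ hv₀
    rcases eq_or_lt_of_le (ht i) with h0 | h0
    · rw [← h0]
      exact lsc_phiF_zero hcL hv₀
    · have heq : (fun v => phiF φ L v (t i)) = fun v => ((t i * φ (v / t i) : ℝ) : EReal) := by
        funext v
        simp [phiF, h0]
      rw [heq]
      apply ContinuousWithinAt.lowerSemicontinuousWithinAt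
      apply continuous_coe_real_ereal.continuousAt.comp_continuousWithinAt
      apply ContinuousWithinAt.mul continuousWithinAt_const
      have hdiv : ContinuousWithinAt (fun v : ℝ => v / t i) (Set.Ici 0) v₀ :=
        (continuousWithinAt_id.div_const _)
      refine ContinuousWithinAt.comp (hφcont _ ?_) hdiv ?_
      · exact div_nonneg hv₀ h0.le
      · intro v hv
        exact div_nonneg hv h0.le
  -- lower semicontinuity of `Dphi` on `M`
  have hlsc : LowerSemicontinuousOn (fun s => Dphi φ L s t) M := by
    intro p hp
    have hproj : ∀ i : Fin m,
        LowerSemicontinuousWithinAt (fun s : Fin m → ℝ => phiF φ L (s i) (t i)) M p := by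
      intro i
      have hg := hcoord i (p i) (hMnn p hp i)
      intro y hy
      have htt : Tendsto (fun s : Fin m → ℝ => s i) (𝓝[M] p) (𝓝[Set.Ici 0] (p i)) := by
        apply tendsto_nhdsWithin_of_tendsto_nhds_of_eventually_within
        · exact ((continuous_apply i).tendsto p).mono_left nhdsWithin_le_nhds
        · filter_upwards [self_mem_nhdsWithin] with s hs using hMnn s hs i
      exact htt.eventually (hg y hy)
    have key : ∀ u : Finset (Fin m),
        LowerSemicontinuousWithinAt (fun s => ∑ i ∈ u, phiF φ L (s i) (t i)) M p ∧
        (∑ i ∈ u, phiF φ L (p i) (t i)) ≠ ⊥ := by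
      intro u
      induction u using Finset.induction with
      | empty =>
        constructor
        · simpa using (lowerSemicontinuousWithinAt_const :
            LowerSemicontinuousWithinAt (fun _ : Fin m → ℝ => (0:EReal)) M p)
        · simp
      | @insert a u' hnot ih =>
        obtain ⟨ihl, ihb⟩ := ih
        have hterm := hproj a
        have hadd := hterm.add' ihl
          (EReal.continuousAt_add (Or.inr ihb) (Or.inl (phiF_ne_bot hLbot _ _)))
        constructor
        · have heq : (fun s : Fin m → ℝ => ∑ i ∈ insert a u', phiF φ L (s i) (t i)) =
              fun s => phiF φ L (s a) (t a) + ∑ i ∈ u', phiF φ L (s i) (t i) := by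
            funext s
            rw [Finset.sum_insert hnot]
          rw [heq]
          exact hadd
        · rw [Finset.sum_insert hnot, Ne, EReal.add_eq_bot_iff]
          push_neg
          exact ⟨phiF_ne_bot hLbot _ _, ihb⟩
    have hfin := (key Finset.univ).1
    simpa [Dphi] using hfin
  obtain ⟨p, hpM, hmin⟩ := exists_min_of_lscOn hMne hMcpt hlsc
  exact ⟨p, hpM, le_antisymm (le_iInf₂ fun s hs => hmin s hs) (iInf₂_le p hpM)⟩
end

section
/- Let t0 ∈ (0,1)^m and assume there exists an open neighborhood N(t0) ⊆ (0,1)^m of t0 such that for every t ∈ N(t0) the φ-projection of t on M = S(cl(Θ)) exists and is unique. Then the map ϑ* : N(t0) → cl(Θ), assigning to each t ∈ N(t0) the unique θ ∈ cl(Θ) such that S(θ) is the φ-projection of t on M, is continuous at t0. -/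
open Filter Topology

/-- Coercion of a real finite sum into `EReal`. -/
lemma ereal_coe_fsum {ι : Type*} (s : Finset ι) (f : ι → ℝ) :
    ((∑ i ∈ s, f i : ℝ) : EReal) = ∑ i ∈ s, ((f i : ℝ) : EReal) := by
  induction s using Finset.cons_induction with
  | empty => simp
  | cons a s ha ih => rw [Finset.sum_cons, Finset.sum_cons, EReal.coe_add, ih]

/-- If a function eventually takes values in a compact set and `a` is its unique
map-cluster point along a nontrivial filter, then it tends to `a`. -/
lemma tendsto_of_unique_mapClusterPt {α X : Type*} [TopologicalSpace X] [T3Space X]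
    {K : Set X} (hK : IsCompact K) {F : Filter α} [NeBot F] {f : α → X}
    (hfK : ∀ᶠ x in F, f x ∈ K) {a : X}
    (ha : ∀ x, MapClusterPt x F f → x = a) : Tendsto f F (𝓝 a) := by
  by_contra h
  obtain ⟨s, hs, hfs⟩ := not_tendsto_iff_exists_frequently_notMem.mp h
  obtain ⟨V, hV, hVc, hVs⟩ := exists_mem_nhds_isClosed_subset hs
  have hfV : ∃ᶠ x in F, f x ∈ Vᶜ := hfs.mono fun x hx hv => hx (hVs hv)
  have hG : (F ⊓ 𝓟 {x | f x ∈ Vᶜ}).NeBot := Filter.frequently_iff_neBot.mp hfV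
  set G := F ⊓ 𝓟 {x | f x ∈ Vᶜ} with hGdef
  have hGK : map f G ≤ 𝓟 K := by
    rw [le_principal_iff, mem_map]
    exact mem_of_superset (mem_inf_of_left (hfK : _ ∈ F)) fun x hx => hx
  haveI : (map f G).NeBot := map_neBot
  obtain ⟨x, hxK, hx⟩ := hK.exists_clusterPt hGK
  have hxa : x = a := ha x (hx.mono (map_mono inf_le_left))
  have hGV : map f G ≤ 𝓟 Vᶜ := by
    rw [le_principal_iff, mem_map]
    exact mem_inf_of_right (mem_principal_self _)
  have hxV : x ∈ closure Vᶜ := mem_closure_iff_clusterPt.mpr (hx.mono hGV)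
  rw [closure_compl, hxa] at hxV
  exact hxV (mem_interior_iff_mem_nhds.mpr hV)

/-- under the framework assumptions, if on an open neighborhood
`N ⊆ (0,1)^m` of `t0` the `φ`-projection on `M = S(cl Θ)` exists and is unique,
then the parameter map `ϑ*` (characterized by: `S (ϑ* t)` is the unique
`φ`-projection of `t` on `M`, `ϑ* t ∈ cl Θ`) is continuous at `t0`. -/
theorem statement8 (m k : ℕ) (hm : 1 ≤ m) (hk : 1 ≤ k) (hkm : k ≤ m)
    (φ : ℝ → ℝ) (L : EReal)
    (hφconv : ConvexOn ℝ (Set.Ici 0) φ)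
    (hφ0 : ContinuousWithinAt φ (Set.Ici 0) 0)
    (hL : Tendsto (fun x : ℝ => ((φ x / x : ℝ) : EReal)) atTop (𝓝 L))
    (hφsc : StrictConvexOn ℝ (Set.Ici (0 : ℝ)) φ)
    (hφC2 : ContDiffOn ℝ 2 φ (Set.Ioi (0 : ℝ)))
    (Θ : Set (Fin k → ℝ)) (hΘbd : Bornology.IsBounded Θ)
    (hΘint : (interior Θ).Nonempty)
    (S : (Fin k → ℝ) → (Fin m → ℝ))
    (hScont : ContinuousOn S (closure Θ))
    (hSinj : Set.InjOn S (closure Θ))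
    (hSC2 : ContDiffOn ℝ 2 S (interior Θ))
    (hSrange : ∀ θ ∈ closure Θ, ∀ i, S θ i ∈ Set.Icc (0 : ℝ) 1)
    (hSint : ∀ θ ∈ interior Θ, ∀ i, S θ i ∈ Set.Ioo (0 : ℝ) 1)
    (t0 : Fin m → ℝ) (ht0 : ∀ i, t0 i ∈ Set.Ioo (0 : ℝ) 1)
    (N : Set (Fin m → ℝ)) (hNopen : IsOpen N) (ht0N : t0 ∈ N)
    (hNsub : ∀ t ∈ N, ∀ i, t i ∈ Set.Ioo (0 : ℝ) 1)
    (ϑ : (Fin m → ℝ) → (Fin k → ℝ))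
    (hϑ : ∀ t ∈ N, ϑ t ∈ closure Θ ∧
      ∀ s, IsPhiProj φ L (S '' closure Θ) t s ↔ s = S (ϑ t)) :
    ContinuousWithinAt ϑ N t0 := by
  -- continuity of φ on [0,∞)
  have hφcont : ContinuousOn φ (Set.Ici 0) := by
    intro x hx
    rcases eq_or_lt_of_le (Set.mem_Ici.mp hx) with h0 | h0
    · exact h0 ▸ hφ0
    · exact ((hφC2.continuousOn x h0).continuousAt (isOpen_Ioi.mem_nhds h0)).continuousWithinAt
  -- real form of Dphi for positive second coordinate
  have hDcoe : ∀ (s t : Fin m → ℝ), (∀ i, 0 < t i) →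
      Dphi φ L s t = ((∑ i, t i * φ (s i / t i) : ℝ) : EReal) := by
    intro s t ht
    rw [Dphi, ereal_coe_fsum]
    exact Finset.sum_congr rfl fun i _ => by rw [phiF, if_pos (ht i)]
  have hK : IsCompact (closure Θ) := hΘbd.isCompact_closure
  haveI : (𝓝[N] t0).NeBot := mem_closure_iff_nhdsWithin_neBot.mp (subset_closure ht0N)
  have hNev : ∀ᶠ t in 𝓝[N] t0, t ∈ N := eventually_mem_nhdsWithin
  have hϑK : ∀ᶠ t in 𝓝[N] t0, ϑ t ∈ closure Θ := hNev.mono fun t ht => (hϑ t ht).1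
  apply tendsto_of_unique_mapClusterPt hK hϑK
  intro th hcl
  -- the cluster point lies in the (closed) set closure Θ
  have hθK : th ∈ closure Θ := by
    have h1 : map ϑ (𝓝[N] t0) ≤ 𝓟 (closure Θ) := by
      rw [le_principal_iff, mem_map]; exact hϑK
    have h2 : ClusterPt th (𝓟 (closure Θ)) := hcl.clusterPt.mono h1
    have := mem_closure_iff_clusterPt.mpr h2
    rwa [isClosed_closure.closure_eq] at this
  obtain ⟨U, hUF, hUt⟩ := mapClusterPt_iff_ultrafilter.mp hcl
  have htU : Tendsto (fun t : Fin m → ℝ => t) (↑U) (𝓝 t0) :=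
    (hUF.trans nhdsWithin_le_nhds : (↑U : Filter (Fin m → ℝ)) ≤ 𝓝 t0)
  have hUN : ∀ᶠ t in ↑U, t ∈ N := hNev.filter_mono hUF
  -- generic limit computation for the divergence integrand sums
  have key : ∀ (g : (Fin m → ℝ) → (Fin m → ℝ)) (g0 : Fin m → ℝ),
      Tendsto g (↑U) (𝓝 g0) → (∀ᶠ t in ↑U, ∀ i, 0 ≤ g t i) → (∀ i, 0 ≤ g0 i) →
      Tendsto (fun t => ∑ i, t i * φ (g t i / t i)) (↑U)
        (𝓝 (∑ i, t0 i * φ (g0 i / t0 i))) := by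
    intro g g0 hg hg0ev hg00
    apply tendsto_finset_sum
    intro i _
    have hti : Tendsto (fun t : Fin m → ℝ => t i) ↑U (𝓝 (t0 i)) :=
      ((continuous_apply i).tendsto t0).comp htU
    have hgi : Tendsto (fun t => g t i) ↑U (𝓝 (g0 i)) :=
      ((continuous_apply i).tendsto g0).comp hg
    have hrat : Tendsto (fun t => g t i / t i) ↑U (𝓝 (g0 i / t0 i)) :=
      hgi.div hti (ne_of_gt (ht0 i).1)
    have hratnn : ∀ᶠ t in ↑U, g t i / t i ∈ Set.Ici (0 : ℝ) :=
      (hUN.and hg0ev).mono fun t ⟨htN, hgt⟩ =>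
        div_nonneg (hgt i) (le_of_lt (hNsub t htN i).1)
    have hφr : Tendsto (fun t => φ (g t i / t i)) ↑U (𝓝 (φ (g0 i / t0 i))) := by
      have h0 : g0 i / t0 i ∈ Set.Ici (0 : ℝ) :=
        div_nonneg (hg00 i) (le_of_lt (ht0 i).1)
      exact (hφcont _ h0).tendsto.comp (tendsto_nhdsWithin_iff.mpr ⟨hrat, hratnn⟩)
    exact hti.mul hφr
  -- limit of the value at the projection
  have hϑU : Tendsto ϑ ↑U (𝓝[closure Θ] th) :=
    tendsto_nhdsWithin_iff.mpr ⟨hUt, hUN.mono fun t ht => (hϑ t ht).1⟩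
  have hSϑ : Tendsto (fun t => S (ϑ t)) ↑U (𝓝 (S th)) :=
    ((hScont th hθK).tendsto).comp hϑU
  have tend1 : Tendsto (fun t => ∑ i, t i * φ (S (ϑ t) i / t i)) (↑U)
      (𝓝 (∑ i, t0 i * φ (S th i / t0 i))) :=
    key (fun t => S (ϑ t)) (S th) hSϑ
      (hUN.mono fun t ht i => (hSrange _ (hϑ t ht).1 i).1)
      (fun i => (hSrange th hθK i).1)
  -- limiting inequality against each fixed member of M
  have limineq : ∀ s ∈ S '' closure Θ,
      (∑ i, t0 i * φ (S th i / t0 i)) ≤ ∑ i, t0 i * φ (s i / t0 i) := by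
    rintro s hs
    obtain ⟨θ', hθ', rfl⟩ := hs
    have tend2 : Tendsto (fun t : Fin m → ℝ => ∑ i, t i * φ (S θ' i / t i)) (↑U)
        (𝓝 (∑ i, t0 i * φ (S θ' i / t0 i))) :=
      key (fun _ => S θ') (S θ') tendsto_const_nhds
        (Filter.Eventually.of_forall fun t i => (hSrange θ' hθ' i).1)
        (fun i => (hSrange θ' hθ' i).1)
    have hineq : ∀ᶠ t in ↑U,
        (∑ i, t i * φ (S (ϑ t) i / t i)) ≤ ∑ i, t i * φ (S θ' i / t i) := by
      refine hUN.mono fun t ht => ?_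
      have hproj := ((hϑ t ht).2 (S (ϑ t))).mpr rfl
      have hle : Dphi φ L (S (ϑ t)) t ≤ Dphi φ L (S θ') t :=
        hproj.2.le.trans (iInf₂_le (S θ') ⟨θ', hθ', rfl⟩)
      have htpos : ∀ i, 0 < t i := fun i => (hNsub t ht i).1
      rw [hDcoe _ _ htpos, hDcoe _ _ htpos] at hle
      exact_mod_cast hle
    exact le_of_tendsto_of_tendsto tend1 tend2 hineq
  -- S th is the φ-projection of t0, so th = ϑ t0
  have ht0pos : ∀ i, 0 < t0 i := fun i => (ht0 i).1
  have hmem : S th ∈ S '' closure Θ := ⟨th, hθK, rfl⟩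
  have hproj0 : IsPhiProj φ L (S '' closure Θ) t0 (S th) := by
    refine ⟨hmem, le_antisymm (le_iInf₂ fun s hs => ?_) (iInf₂_le _ hmem)⟩
    rw [hDcoe _ _ ht0pos, hDcoe _ _ ht0pos]
    exact_mod_cast limineq s hs
  have hfinal := ((hϑ t0 ht0N).2 (S th)).mp hproj0
  exact hSinj hθK (hϑ t0 ht0N).1 hfinal
end
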